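/- Let W = W(Γ) be the right-angled Coxeter group of a simple graph Γ with word length ℓ. Let C₂ be a finite set of pairwise adjacent vertices of Γ and let C₁ ⊆ C₂; write r₁ = ∏_{v ∈ C₁} s_v and r₂ = ∏_{v ∈ C₂} s_v. Let x, g ∈ W satisfy ℓ(x·r₂) = ℓ(x) − |C₂| and ℓ(x·r₂) = ℓ(g) + ℓ(g·x·r₂). Then ℓ(x·r₁) = ℓ(x) − |C₁| and ℓ(x·r₁) = ℓ(g) + ℓ(g·x·r₁). -/

import Mathlib

namespace RACG

variable {V : Type*} [DecidableEq V]

/-- The right-angled Coxeter matrix of a simple graph `G`: diagonal entries are `1`,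
entries at adjacent pairs are `2` (the generators commute), and entries at distinct
non-adjacent pairs are `0` (representing `∞`, i.e. no relation). -/
def racgMatrix (G : SimpleGraph V) [DecidableRel G.Adj] : CoxeterMatrix V where
  M a b := if a = b then 1 else if G.Adj a b then 2 else 0
  isSymm := by
    refine Matrix.ext fun a b => ?_
    show (if b = a then 1 else if G.Adj b a then 2 else 0) =
      (if a = b then 1 else if G.Adj a b then 2 else 0)
    by_cases h : a = b
    · subst h; rfl
    · rw [if_neg h, if_neg (Ne.symm h)]
      by_cases hadj : G.Adj a b
      · rw [if_pos hadj, if_pos hadj.symm]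
      · rw [if_neg hadj, if_neg (fun h' => hadj h'.symm)]
  diagonal := fun i => by simp
  off_diagonal := fun i i' h => by
    beta_reduce
    rw [if_neg h]
    by_cases hadj : G.Adj i i' <;> simp [hadj]

variable {G : SimpleGraph V} [DecidableRel G.Adj] {W : Type*} [Group W]

/-- In the right-angled Coxeter group of `G`, the simple reflections at adjacent
vertices commute. -/
theorem simple_commute_of_adj (cs : CoxeterSystem (racgMatrix G) W) {a b : V}
    (h : G.Adj a b) : Commute (cs.simple a) (cs.simple b) := by
  have hM : (racgMatrix G) a b = 2 := by
    simp only [racgMatrix, if_neg h.ne, if_pos h]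
  have h2 := cs.simple_mul_simple_pow a b
  rw [hM, pow_two] at h2
  have h3 := mul_eq_one_iff_eq_inv.mp h2
  rwa [mul_inv_rev, cs.inv_simple, cs.inv_simple] at h3

/-- The clique word associated to a finite set `C` of pairwise adjacent vertices:
the product of the simple reflections at the vertices of `C` (in any order; these
commute). If `C` is not a clique, we set the value to `1` by convention. -/
noncomputable def cliqueWord (cs : CoxeterSystem (racgMatrix G) W) (C : Finset V) : W :=
  if h : (C : Set V).Pairwise G.Adj then
    C.noncommProd (fun v => cs.simple v)
      (fun _ ha _ hb hab => simple_commute_of_adj cs (h ha hb hab))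
  else 1

/-- `w` is a clique word if it is the product of the simple reflections over a finite
set of pairwise adjacent vertices. -/
def IsCliqueWord (cs : CoxeterSystem (racgMatrix G) W) (w : W) : Prop :=
  ∃ C : Finset V, (C : Set V).Pairwise G.Adj ∧ w = cliqueWord cs C

private lemma exp2 (x : V → Multiplicative (ZMod 2)) : x * x = 1 := by
  funext u
  show x u * x u = 1
  have h : ∀ a : ZMod 2, a + a = 0 := by decide
  rw [← ofAdd_toAdd (x u), ← ofAdd_add, h, ofAdd_zero]

/-- A sign homomorphism recording, for each vertex, the parity of the number of occurrences
of the corresponding generator. -/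
noncomputable def sgn (cs : CoxeterSystem (racgMatrix G) W) :
    W →* (V → Multiplicative (ZMod 2)) :=
  cs.lift ⟨fun v u => if u = v then Multiplicative.ofAdd 1 else 1, by
    intro i i'
    by_cases h : i = i'
    · subst h
      have hM : (racgMatrix G) i i = 1 := by simp [racgMatrix]
      rw [hM, pow_one]
      exact exp2 _
    · by_cases hadj : G.Adj i i'
      · have hM : (racgMatrix G) i i' = 2 := by simp [racgMatrix, h, hadj]
        rw [hM, pow_two, mul_mul_mul_comm, exp2, exp2, one_mul]
      · have hM : (racgMatrix G) i i' = 0 := by simp [racgMatrix, h, hadj]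
        rw [hM, pow_zero]⟩

lemma sgn_simple (cs : CoxeterSystem (racgMatrix G) W) (v : V) :
    sgn cs (cs.simple v) = fun u => if u = v then Multiplicative.ofAdd 1 else 1 :=
  cs.lift_apply_simple _ v

lemma sgn_wordProd_of_not_mem (cs : CoxeterSystem (racgMatrix G) W) (ω : List V) (u : V)
    (hu : u ∉ ω) : sgn cs (cs.wordProd ω) u = 1 := by
  induction ω with
  | nil => rw [cs.wordProd_nil, map_one]; rfl
  | cons a ω ih =>
    rw [cs.wordProd_cons, map_mul]
    have hua : u ≠ a := fun h => hu (by simp [h])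
    have hmem : u ∉ ω := fun h => hu (List.mem_cons_of_mem a h)
    show sgn cs (cs.simple a) u * sgn cs (cs.wordProd ω) u = 1
    rw [sgn_simple, ih hmem]
    simp [hua]

lemma sgn_cliqueWord (cs : CoxeterSystem (racgMatrix G) W) {C : Finset V}
    (hC : (C : Set V).Pairwise G.Adj) {u : V} (hu : u ∈ C) :
    sgn cs (cliqueWord cs C) u = Multiplicative.ofAdd 1 := by
  have hcw : cliqueWord cs C = C.noncommProd (fun v => cs.simple v)
      (Set.Pairwise.mono' (fun _ _ h => simple_commute_of_adj cs h) hC) := by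
    rw [cliqueWord, dif_pos hC]
  rw [hcw, Finset.map_noncommProd]
  rw [Finset.noncommProd_eq_prod]
  rw [show (∏ v ∈ C, (sgn cs (cs.simple v))) u = ∏ v ∈ C, (sgn cs (cs.simple v)) u from
    Finset.prod_apply u C _]
  calc ∏ v ∈ C, (sgn cs (cs.simple v)) u
      = ∏ v ∈ C, if u = v then Multiplicative.ofAdd (1 : ZMod 2) else 1 := by
        refine Finset.prod_congr rfl fun v _ => ?_
        rw [sgn_simple]
    _ = Multiplicative.ofAdd 1 := by
        rw [Finset.prod_ite_eq C u (fun _ => Multiplicative.ofAdd (1 : ZMod 2)), if_pos hu]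

lemma length_noncommProd_le (cs : CoxeterSystem (racgMatrix G) W) :
    ∀ (C : Finset V)
      (comm : (C : Set V).Pairwise (Function.onFun Commute fun v => cs.simple v)),
      cs.length (C.noncommProd (fun v => cs.simple v) comm) ≤ C.card := by
  intro C
  induction C using Finset.induction with
  | empty => intro comm; simp
  | @insert a s ha ih =>
    intro comm
    rw [Finset.noncommProd_insert_of_notMem _ _ _ _ ha]
    calc cs.length _ ≤ cs.length (cs.simple a) +
          cs.length (s.noncommProd (fun v => cs.simple v) _) := cs.length_mul_le _ _
      _ ≤ 1 + s.card := by
          have := ih (comm.mono (by simp [Set.subset_insert]))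
          rw [cs.length_simple]
          omega
      _ = (insert a s).card := by rw [Finset.card_insert_of_notMem ha]; omega

lemma length_cliqueWord_le (cs : CoxeterSystem (racgMatrix G) W) (C : Finset V) :
    cs.length (cliqueWord cs C) ≤ C.card := by
  rw [cliqueWord]
  split
  · exact length_noncommProd_le cs C _
  · simp

lemma card_le_length_cliqueWord (cs : CoxeterSystem (racgMatrix G) W) {C : Finset V}
    (hC : (C : Set V).Pairwise G.Adj) :
    C.card ≤ cs.length (cliqueWord cs C) := by
  obtain ⟨ω, hω, hprod⟩ := cs.exists_reduced_word (cliqueWord cs C)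
  have hsub : C ⊆ ω.toFinset := by
    intro u hu
    rw [List.mem_toFinset]
    by_contra hmem
    have h1 := sgn_wordProd_of_not_mem cs ω u hmem
    rw [← hprod, sgn_cliqueWord cs hC hu] at h1
    exact absurd h1 (by decide)
  calc C.card ≤ ω.toFinset.card := Finset.card_le_card hsub
    _ ≤ ω.length := ω.toFinset_card_le
    _ = cs.length (cliqueWord cs C) := by rw [hprod]; exact hω.symm

lemma length_cliqueWord (cs : CoxeterSystem (racgMatrix G) W) {C : Finset V}
    (hC : (C : Set V).Pairwise G.Adj) :
    cs.length (cliqueWord cs C) = C.card :=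
  le_antisymm (length_cliqueWord_le cs C) (card_le_length_cliqueWord cs hC)

lemma cliqueWord_mul_sdiff (cs : CoxeterSystem (racgMatrix G) W) {C₁ C₂ : Finset V}
    (hC₂ : (C₂ : Set V).Pairwise G.Adj) (hsub : C₁ ⊆ C₂) :
    cliqueWord cs C₁ * cliqueWord cs (C₂ \ C₁) = cliqueWord cs C₂ := by
  have hC₁ : (C₁ : Set V).Pairwise G.Adj := hC₂.mono (by exact_mod_cast hsub)
  have hCd : ((C₂ \ C₁ : Finset V) : Set V).Pairwise G.Adj :=
    hC₂.mono (by exact_mod_cast Finset.sdiff_subset)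
  have hU : C₁ ∪ (C₂ \ C₁) = C₂ := Finset.union_sdiff_of_subset hsub
  have commU : ((C₁ ∪ (C₂ \ C₁) : Finset V) : Set V).Pairwise
      (Function.onFun Commute fun v => cs.simple v) := fun a ha b hb hab =>
    simple_commute_of_adj cs (hC₂ (by rw [← hU]; exact_mod_cast ha)
      (by rw [← hU]; exact_mod_cast hb) hab)
  rw [cliqueWord, cliqueWord, cliqueWord, dif_pos hC₁, dif_pos hCd, dif_pos hC₂]
  calc _ = (C₁ ∪ (C₂ \ C₁)).noncommProd (fun v => cs.simple v) commU :=
        (Finset.noncommProd_union_of_disjoint Finset.disjoint_sdiff _ commU).symm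
    _ = _ := Finset.noncommProd_congr hU (fun _ _ => rfl) commU

end RACG

theorem length_sub_subclique
    {V : Type*} [DecidableEq V] (G : SimpleGraph V) [DecidableRel G.Adj]
    {W : Type*} [Group W] (cs : CoxeterSystem (RACG.racgMatrix G) W)
    (C₁ C₂ : Finset V) (hC₂ : (C₂ : Set V).Pairwise G.Adj) (hsub : C₁ ⊆ C₂)
    (r₁ r₂ : W)
    (hr₁ : r₁ = RACG.cliqueWord cs C₁) (hr₂ : r₂ = RACG.cliqueWord cs C₂)
    (x g : W)
    (hx : cs.length (x * r₂) = cs.length x - C₂.card)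
    (hg : cs.length (x * r₂) = cs.length g + cs.length (g * x * r₂)) :
    cs.length (x * r₁) = cs.length x - C₁.card ∧
      cs.length (x * r₁) = cs.length g + cs.length (g * x * r₁) := by
  set r' := RACG.cliqueWord cs (C₂ \ C₁) with hr'
  have hmul : r₁ * r' = r₂ := by
    rw [hr₁, hr₂, hr']; exact RACG.cliqueWord_mul_sdiff cs hC₂ hsub
  have hn : C₁.card ≤ C₂.card := Finset.card_le_card hsub
  have hcard' : (C₂ \ C₁).card = C₂.card - C₁.card := Finset.card_sdiff_of_subset hsub
  have hlr1 : cs.length r₁ ≤ C₁.card := hr₁ ▸ RACG.length_cliqueWord_le cs C₁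
  have hlr2 : cs.length r₂ = C₂.card := hr₂ ▸ RACG.length_cliqueWord cs hC₂
  have hlr' : cs.length r' ≤ C₂.card - C₁.card :=
    hcard' ▸ RACG.length_cliqueWord_le cs (C₂ \ C₁)
  -- nondegeneracy: ℓ x ≥ |C₂|
  have hxge : C₂.card ≤ cs.length x := by
    by_contra hlt
    push_neg at hlt
    have h0 : cs.length (x * r₂) = 0 := by omega
    have h1 : x * r₂ = 1 := cs.length_eq_zero_iff.mp h0
    have h2 : x = r₂⁻¹ := eq_inv_of_mul_eq_one_left
      (by exact h1)
    rw [h2, cs.length_inv, hlr2] at hlt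
    omega
  -- key inequalities
  have h1 : cs.length x ≤ cs.length (x * r₁) + C₁.card := by
    calc cs.length x = cs.length ((x * r₁) * r₁⁻¹) := by group
      _ ≤ cs.length (x * r₁) + cs.length r₁⁻¹ := cs.length_mul_le _ _
      _ ≤ cs.length (x * r₁) + C₁.card := by rw [cs.length_inv]; omega
  have key : ∀ w : W, cs.length (w * r₁) ≤ cs.length (w * r₂) + (C₂.card - C₁.card) := by
    intro w
    have hw : w * r₁ = (w * r₂) * r'⁻¹ := by rw [← hmul]; group
    calc cs.length (w * r₁) = cs.length ((w * r₂) * r'⁻¹) := by rw [hw]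
      _ ≤ cs.length (w * r₂) + cs.length r'⁻¹ := cs.length_mul_le _ _
      _ ≤ cs.length (w * r₂) + (C₂.card - C₁.card) := by rw [cs.length_inv]; omega
  have h2 : cs.length (x * r₁) ≤ cs.length (x * r₂) + (C₂.card - C₁.card) := key x
  have h4 : cs.length (g * x * r₁) ≤ cs.length (g * x * r₂) + (C₂.card - C₁.card) :=
    key (g * x)
  have h3 : cs.length (x * r₁) ≤ cs.length g + cs.length (g * x * r₁) := by
    calc cs.length (x * r₁) = cs.length (g⁻¹ * (g * x * r₁)) := by group
      _ ≤ cs.length g⁻¹ + cs.length (g * x * r₁) := cs.length_mul_le _ _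
      _ = cs.length g + cs.length (g * x * r₁) := by rw [cs.length_inv]
  omega
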